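/- arXiv:1705.05518 — 3 statements merged into one kernel-verified Lean document; each statement's English description precedes it below -/
import Mathlib

section
/- Define v̄(x', x_d) = (x_d - h(x'))/(ε + h₁(x') - h(x')) on the narrow region Ω_{2R} = { h(x') < x_d < ε + h₁(x'), |x'| < 2R }, where h₁, h satisfy h₁(0') = h(0') = 0, ∇h₁(0') = ∇h(0') = 0, C² norms bounded, and ε + h₁ - h ≥ (1/C)(ε + |x'|²). Then for k = 1, …, d-1: |∂_{x_k} v̄(x)| ≤ C|x'|/(ε + |x'|²) and 1/(C(ε + |x'|²)) ≤ |∂_{x_d} v̄(x)| ≤ C/(ε + |x'|²) for all x ∈ Ω_{2R}. -/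
lemma taylor_aux {E : Type*} [NormedAddCommGroup E] [NormedSpace ℝ E]
    (f : E → ℝ) (R κ : ℝ) (hf : ContDiff ℝ 2 f) (hf0 : f 0 = 0)
    (hdf0 : fderiv ℝ f 0 = 0) (hκ : 0 ≤ κ)
    (hb : ∀ y : E, ‖y‖ < 2 * R → ‖iteratedFDeriv ℝ 2 f y‖ ≤ κ) :
    ∀ x : E, ‖x‖ < 2 * R → ‖fderiv ℝ f x‖ ≤ κ * ‖x‖ ∧ |f x| ≤ κ * ‖x‖ ^ 2 := by
  have hdf : Differentiable ℝ f := hf.differentiable (by norm_num)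
  have hdf' : Differentiable ℝ (fderiv ℝ f) :=
    (hf.fderiv_right (m := 1) (by norm_num)).differentiable (by norm_num)
  have hcv : Convex ℝ (Metric.ball (0 : E) (2 * R)) := convex_ball _ _
  have key : ∀ x : E, ‖x‖ < 2 * R → ‖fderiv ℝ f x‖ ≤ κ * ‖x‖ := by
    intro x hx
    have h0mem : (0 : E) ∈ Metric.ball (0 : E) (2 * R) := by
      simp [Metric.mem_ball]
      nlinarith [norm_nonneg x]
    have hxmem : x ∈ Metric.ball (0 : E) (2 * R) := by
      simp [Metric.mem_ball]; simpa using hx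
    have := hcv.norm_image_sub_le_of_norm_fderiv_le (f := fderiv ℝ f) (C := κ)
      (fun y _ => hdf' y) (fun y hy => ?_) hxmem h0mem
    · simpa [hdf0] using this
    · have : ‖fderiv ℝ (fderiv ℝ f) y‖ = ‖iteratedFDeriv ℝ 2 f y‖ := by
        rw [← norm_iteratedFDeriv_fderiv (n := 1)]
        rw [← norm_iteratedFDeriv_fderiv (n := 0), norm_iteratedFDeriv_zero]
      rw [this]
      exact hb y (by simpa [Metric.mem_ball] using hy)
  intro x hx
  refine ⟨key x hx, ?_⟩
  have hcv2 : Convex ℝ (Metric.closedBall (0 : E) ‖x‖) := convex_closedBall _ _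
  have h0mem : (0 : E) ∈ Metric.closedBall (0 : E) ‖x‖ := by
    simp [Metric.mem_closedBall]
  have hxmem : x ∈ Metric.closedBall (0 : E) ‖x‖ := by
    simp [Metric.mem_closedBall]
  have := hcv2.norm_image_sub_le_of_norm_fderiv_le (f := f) (C := κ * ‖x‖)
    (fun y _ => hdf y) (fun y hy => ?_) hxmem h0mem
  · simp only [hf0, zero_sub, norm_neg, Real.norm_eq_abs] at this
    calc |f x| ≤ κ * ‖x‖ * ‖x‖ := this
    _ = κ * ‖x‖ ^ 2 := by ring
  · have hy' : ‖y‖ ≤ ‖x‖ := by simpa [Metric.mem_closedBall] using hy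
    calc ‖fderiv ℝ f y‖ ≤ κ * ‖y‖ := key y (lt_of_le_of_lt hy' hx)
    _ ≤ κ * ‖x‖ := by nlinarith


open ContinuousLinearMap

set_option maxHeartbeats 2000000 in
/-- first-derivative bounds for the auxiliary function
v̄(x',x_d) = (x_d - h(x'))/(ε + h₁(x') - h(x')) in the narrow region. -/
theorem stmt3 (n : ℕ) (κ₂ R C₀ : ℝ) (hκ₂ : 0 < κ₂) (hR : 0 < R) (hC₀ : 0 < C₀) :
    ∃ C > (0:ℝ), ∀ ε : ℝ, 0 < ε → ε < 1/2 →
      ∀ h₁ h : EuclideanSpace ℝ (Fin n) → ℝ,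
        ContDiff ℝ 2 h₁ → ContDiff ℝ 2 h →
        h₁ 0 = 0 → h 0 = 0 → fderiv ℝ h₁ 0 = 0 → fderiv ℝ h 0 = 0 →
        (∀ i : ℕ, i ≤ 2 → ∀ x : EuclideanSpace ℝ (Fin n), ‖x‖ < 2 * R →
          ‖iteratedFDeriv ℝ i h₁ x‖ ≤ κ₂ ∧ ‖iteratedFDeriv ℝ i h x‖ ≤ κ₂) →
        (∀ x : EuclideanSpace ℝ (Fin n), ‖x‖ < 2 * R →
          (1/C₀) * (ε + ‖x‖ ^ 2) ≤ ε + h₁ x - h x) →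
        ∀ (x' : EuclideanSpace ℝ (Fin n)) (t : ℝ),
          ‖x'‖ < 2 * R → h x' < t → t < ε + h₁ x' →
          (∀ k : Fin n,
            |fderiv ℝ (fun p : EuclideanSpace ℝ (Fin n) × ℝ =>
                (p.2 - h p.1) / (ε + h₁ p.1 - h p.1)) (x', t)
                (EuclideanSpace.single k 1, 0)|
              ≤ C * ‖x'‖ / (ε + ‖x'‖ ^ 2)) ∧
          1 / (C * (ε + ‖x'‖ ^ 2))
            ≤ |fderiv ℝ (fun p : EuclideanSpace ℝ (Fin n) × ℝ =>
                (p.2 - h p.1) / (ε + h₁ p.1 - h p.1)) (x', t) (0, 1)| ∧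
          |fderiv ℝ (fun p : EuclideanSpace ℝ (Fin n) × ℝ =>
              (p.2 - h p.1) / (ε + h₁ p.1 - h p.1)) (x', t) (0, 1)|
            ≤ C / (ε + ‖x'‖ ^ 2) := by
  refine ⟨3 * (1 + κ₂) * (1 + C₀), by nlinarith, ?_⟩
  intro ε hε hε2 h₁ h hh₁ hh hh₁0 hh0 hdh₁0 hdh0 hbnd hlo x' t hx' hht hth₁
  set C := 3 * (1 + κ₂) * (1 + C₀) with hC
  have hCpos : 0 < C := by nlinarith
  -- Taylor bounds
  obtain ⟨hgrad₁, habs₁⟩ := taylor_aux h₁ R κ₂ hh₁ hh₁0 hdh₁0 hκ₂.le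
    (fun y hy => (hbnd 2 le_rfl y hy).1) x' hx'
  obtain ⟨hgrad, habs⟩ := taylor_aux h R κ₂ hh hh0 hdh0 hκ₂.le
    (fun y hy => (hbnd 2 le_rfl y hy).2) x' hx'
  set A := fderiv ℝ h x' with hA
  set B := fderiv ℝ h₁ x' with hB
  set S := ε + ‖x'‖ ^ 2 with hS
  set Dx := ε + h₁ x' - h x' with hDx
  have hSpos : 0 < S := by positivity
  have hDlow : (1/C₀) * S ≤ Dx := hlo x' hx'
  have hDpos : 0 < Dx := lt_of_lt_of_le (by positivity) hDlow
  have hDlow' : S ≤ C₀ * Dx := by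
    have h2 := mul_le_mul_of_nonneg_left hDlow hC₀.le
    rwa [show C₀ * ((1/C₀) * S) = S by field_simp] at h2
  have hDup : Dx ≤ (1 + 2*κ₂) * S := by
    have h1 : h₁ x' ≤ κ₂ * ‖x'‖^2 := (abs_le.mp habs₁).2
    have h2 : -(κ₂ * ‖x'‖^2) ≤ h x' := (abs_le.mp habs).1
    have h3 : (0:ℝ) ≤ ‖x'‖^2 := by positivity
    nlinarith
  -- derivative setup
  have hhA : HasFDerivAt h A x' := (hh.differentiable (by norm_num) x').hasFDerivAt
  have hhB : HasFDerivAt h₁ B x' := (hh₁.differentiable (by norm_num) x').hasFDerivAt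
  have hN : HasFDerivAt (fun p : EuclideanSpace ℝ (Fin n) × ℝ => p.2 - h p.1)
      (snd ℝ (EuclideanSpace ℝ (Fin n)) ℝ - A.comp (fst ℝ (EuclideanSpace ℝ (Fin n)) ℝ)) (x', t) :=
    (hasFDerivAt_snd).sub (hhA.comp (x', t) hasFDerivAt_fst)
  have hDfun : HasFDerivAt (fun p : EuclideanSpace ℝ (Fin n) × ℝ => ε + h₁ p.1 - h p.1)
      (B.comp (fst ℝ (EuclideanSpace ℝ (Fin n)) ℝ) - A.comp (fst ℝ (EuclideanSpace ℝ (Fin n)) ℝ)) (x', t) := by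
    have hfst : HasFDerivAt (fun p : EuclideanSpace ℝ (Fin n) × ℝ => p.1)
        (fst ℝ (EuclideanSpace ℝ (Fin n)) ℝ) (x', t) := hasFDerivAt_fst
    have := ((hhB.comp (x', t) hfst).const_add ε).sub
      (hhA.comp (x', t) hfst)
    exact this
  have hDne : (ε + h₁ x' - h x') ≠ 0 := by rw [← hDx]; exact hDpos.ne'
  have hInv : HasFDerivAt (fun p : EuclideanSpace ℝ (Fin n) × ℝ => (ε + h₁ p.1 - h p.1)⁻¹)
      ((-(mulLeftRight ℝ ℝ Dx⁻¹ Dx⁻¹)).comp (B.comp (fst ℝ (EuclideanSpace ℝ (Fin n)) ℝ) - A.comp (fst ℝ (EuclideanSpace ℝ (Fin n)) ℝ)))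
      (x', t) := by
    have := (hasFDerivAt_inv' (𝕜 := ℝ) (R := ℝ) hDne).comp (x', t) hDfun
    exact this
  have hv : HasFDerivAt (fun p : EuclideanSpace ℝ (Fin n) × ℝ => (p.2 - h p.1) / (ε + h₁ p.1 - h p.1))
      ((t - h x') • ((-(mulLeftRight ℝ ℝ Dx⁻¹ Dx⁻¹)).comp
          (B.comp (fst ℝ (EuclideanSpace ℝ (Fin n)) ℝ) - A.comp (fst ℝ (EuclideanSpace ℝ (Fin n)) ℝ))) +
        Dx⁻¹ • (snd ℝ (EuclideanSpace ℝ (Fin n)) ℝ - A.comp (fst ℝ (EuclideanSpace ℝ (Fin n)) ℝ))) (x', t) := by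
    have := hN.mul hInv
    simp only [div_eq_mul_inv]
    exact this
  have hfd := hv.fderiv
  rw [hfd]
  -- evaluation at (0,1)
  have hval_t : ((t - h x') • ((-(mulLeftRight ℝ ℝ Dx⁻¹ Dx⁻¹)).comp
          (B.comp (fst ℝ (EuclideanSpace ℝ (Fin n)) ℝ) - A.comp (fst ℝ (EuclideanSpace ℝ (Fin n)) ℝ))) +
        Dx⁻¹ • (snd ℝ (EuclideanSpace ℝ (Fin n)) ℝ - A.comp (fst ℝ (EuclideanSpace ℝ (Fin n)) ℝ))) ((0 : EuclideanSpace ℝ (Fin n)), (1:ℝ)) = Dx⁻¹ := by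
    simp [mulLeftRight_apply]
  rw [hval_t]
  have habsinv : |Dx⁻¹| = Dx⁻¹ := abs_of_pos (inv_pos.mpr hDpos)
  clear_value A B S Dx C
  clear hv hfd hN hDfun hInv hhA hhB hval_t hbnd hlo
  refine ⟨?_, ?_, ?_⟩
  · -- tangential derivatives
    intro k
    set e : EuclideanSpace ℝ (Fin n) := EuclideanSpace.single k 1 with he
    have hval_k : ((t - h x') • ((-(mulLeftRight ℝ ℝ Dx⁻¹ Dx⁻¹)).comp
          (B.comp (fst ℝ (EuclideanSpace ℝ (Fin n)) ℝ) - A.comp (fst ℝ (EuclideanSpace ℝ (Fin n)) ℝ))) +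
        Dx⁻¹ • (snd ℝ (EuclideanSpace ℝ (Fin n)) ℝ - A.comp (fst ℝ (EuclideanSpace ℝ (Fin n)) ℝ))) (e, (0:ℝ))
        = (t - h x') * (-(Dx⁻¹ * (B e - A e) * Dx⁻¹)) + Dx⁻¹ * (0 - A e) := by
      simp [mulLeftRight_apply]; ring
    rw [hval_k]
    set M := κ₂ * ‖x'‖ with hM
    have hMnn : 0 ≤ M := by positivity
    have hne : ‖e‖ = 1 := by simp [he, EuclideanSpace.norm_single]
    have hae : |A e| ≤ M := by
      calc |A e| ≤ ‖A‖ * ‖e‖ := A.le_opNorm e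
      _ = ‖A‖ := by rw [hne, mul_one]
      _ ≤ M := hgrad
    have hbe : |B e| ≤ M := by
      calc |B e| ≤ ‖B‖ * ‖e‖ := B.le_opNorm e
      _ = ‖B‖ := by rw [hne, mul_one]
      _ ≤ M := hgrad₁
    have hN0 : 0 ≤ t - h x' := by linarith
    have hN0' : t - h x' ≤ Dx := by rw [hDx]; linarith
    set u := Dx⁻¹ with hu
    have hupos : 0 < u := inv_pos.mpr hDpos
    have huD : u * Dx = 1 := inv_mul_cancel₀ hDpos.ne'
    have hstep : |(t - h x') * (-(u * (B e - A e) * u)) + u * (0 - A e)| ≤ 3 * M * u := by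
      have h1 : |(t - h x') * (-(u * (B e - A e) * u))| ≤ 2 * M * u := by
        rw [abs_mul, abs_neg, abs_mul, abs_mul, abs_of_pos hupos]
        have hba : |B e - A e| ≤ 2 * M := by
          calc |B e - A e| ≤ |B e| + |A e| := abs_sub _ _
          _ ≤ 2 * M := by linarith
        have : |t - h x'| ≤ Dx := by rw [abs_of_nonneg hN0]; exact hN0'
        calc |t - h x'| * (u * |B e - A e| * u) ≤ Dx * (u * (2*M) * u) := by
              apply mul_le_mul this _ (by positivity) hDpos.le
              apply mul_le_mul_of_nonneg_right _ hupos.le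
              exact mul_le_mul_of_nonneg_left hba hupos.le
        _ = (u * Dx) * (2 * M * u) := by ring
        _ = 2 * M * u := by rw [huD, one_mul]
      have h2 : |u * (0 - A e)| ≤ M * u := by
        rw [abs_mul, abs_of_pos hupos, zero_sub, abs_neg]
        calc u * |A e| ≤ u * M := mul_le_mul_of_nonneg_left hae hupos.le
        _ = M * u := mul_comm _ _
      calc |(t - h x') * (-(u * (B e - A e) * u)) + u * (0 - A e)|
          ≤ |(t - h x') * (-(u * (B e - A e) * u))| + |u * (0 - A e)| := abs_add_le _ _
      _ ≤ 3 * M * u := by linarith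
    have hu2 : u ≤ C₀ / S := by
      rw [hu, inv_eq_one_div, div_le_div_iff₀ hDpos hSpos]
      linarith [hDlow']
    calc |(t - h x') * (-(u * (B e - A e) * u)) + u * (0 - A e)| ≤ 3 * M * u := hstep
    _ ≤ 3 * M * (C₀ / S) := by
        apply mul_le_mul_of_nonneg_left hu2 (by positivity)
    _ = (3 * M * C₀) / S := by ring
    _ ≤ C * ‖x'‖ / S := by
        rw [div_le_div_iff₀ hSpos hSpos]
        have hxn : (0:ℝ) ≤ ‖x'‖ := norm_nonneg _
        rw [hM, hC]
        nlinarith [mul_nonneg (mul_nonneg hxn hSpos.le) hκ₂.le,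
          mul_nonneg (mul_nonneg hxn hSpos.le) hC₀.le,
          mul_nonneg hxn hSpos.le]
  · -- lower bound
    rw [habsinv, inv_eq_one_div, div_le_div_iff₀ (mul_pos hCpos hSpos) hDpos]
    rw [hC]
    nlinarith [hDup, hSpos.le, hκ₂.le, hC₀.le, mul_nonneg hκ₂.le hSpos.le,
      mul_nonneg hC₀.le hSpos.le, mul_nonneg (mul_nonneg hκ₂.le hC₀.le) hSpos.le]
  · -- upper bound
    rw [habsinv, inv_eq_one_div, div_le_div_iff₀ hDpos hSpos]
    rw [hC]
    nlinarith [hDlow', hDpos.le, mul_nonneg hκ₂.le hDpos.le,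
      mul_nonneg hC₀.le hDpos.le, mul_nonneg (mul_nonneg hκ₂.le hC₀.le) hDpos.le]
end

section
/- With v̄ as above, the second derivatives of v̄ satisfy: |∂_{x_k x_j} v̄(x)| ≤ C/(ε + |x'|²), |∂_{x_k x_d} v̄(x)| ≤ C|x'|/(ε + |x'|²)² for k, j = 1, …, d-1, and ∂_{x_d x_d} v̄(x) = 0, for all x in the narrow region Ω_{2R}. -/
open ContinuousLinearMap Metric Topology

section Aux

variable {E : Type*} [NormedAddCommGroup E] [NormedSpace ℝ E]

private lemma stmt4_snd_eval (f : E → ℝ) (y : E) (κ : ℝ) (hb : ‖iteratedFDeriv ℝ 2 f y‖ ≤ κ)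
    (u v : E) : |fderiv ℝ (fderiv ℝ f) y u v| ≤ κ * ‖u‖ * ‖v‖ := by
  have h2 : fderiv ℝ (fderiv ℝ f) y u v = iteratedFDeriv ℝ 2 f y ![u, v] := by
    rw [iteratedFDeriv_two_apply]; simp
  rw [h2]
  have := (iteratedFDeriv ℝ 2 f y).le_opNorm ![u, v]
  simp only [Fin.prod_univ_two, Matrix.cons_val_zero, Matrix.cons_val_one, Matrix.head_cons] at this
  calc |iteratedFDeriv ℝ 2 f y ![u, v]| ≤ ‖iteratedFDeriv ℝ 2 f y‖ * (‖u‖ * ‖v‖) := this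
    _ ≤ κ * (‖u‖ * ‖v‖) := mul_le_mul_of_nonneg_right hb (by positivity)
    _ = κ * ‖u‖ * ‖v‖ := by ring

private lemma stmt4_fderiv_bound (f : E → ℝ) (κ R : ℝ) (hR : 0 < R) (hf : ContDiff ℝ 2 f)
    (h0 : fderiv ℝ f 0 = 0)
    (hb : ∀ y : E, ‖y‖ < 2 * R → ‖iteratedFDeriv ℝ 2 f y‖ ≤ κ)
    (x : E) (hx : ‖x‖ < 2 * R) : ‖fderiv ℝ f x‖ ≤ κ * ‖x‖ := by
  have hκ0 : 0 ≤ κ := le_trans (norm_nonneg _) (hb 0 (by simpa using by positivity))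
  have hdiff : ∀ y ∈ ball (0:E) (2*R), DifferentiableAt ℝ (fderiv ℝ f) y := fun y _ =>
    ((hf.fderiv_right (m := 1) (by norm_num)).differentiable one_ne_zero) y
  have hbd : ∀ y ∈ ball (0:E) (2*R), ‖fderiv ℝ (fderiv ℝ f) y‖ ≤ κ := by
    intro y hy
    rw [mem_ball, dist_zero_right] at hy
    refine opNorm_le_bound _ hκ0 fun u => ?_
    refine opNorm_le_bound _ (by positivity) fun v => ?_
    have := stmt4_snd_eval f y κ (hb y hy) u v
    calc ‖fderiv ℝ (fderiv ℝ f) y u v‖ = |fderiv ℝ (fderiv ℝ f) y u v| := rfl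
      _ ≤ κ * ‖u‖ * ‖v‖ := this
  have := (convex_ball (0:E) (2*R)).norm_image_sub_le_of_norm_fderiv_le hdiff hbd
    (mem_ball_self (by positivity)) (by rwa [mem_ball, dist_zero_right])
  simpa [h0] using this

private lemma stmt4_inner (ε : ℝ) (h₁ h : E → ℝ) (hh₁ : Differentiable ℝ h₁)
    (hh : Differentiable ℝ h)
    (p : E × ℝ) (hp : ε + h₁ p.1 - h p.1 ≠ 0) :
    HasFDerivAt (fun q : E × ℝ => (q.2 - h q.1) / (ε + h₁ q.1 - h q.1))
      ((p.2 - h p.1) •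
          ((smulRight (1 : ℝ →L[ℝ] ℝ) (-((ε + h₁ p.1 - h p.1) ^ 2)⁻¹)).comp
            ((fderiv ℝ h₁ p.1).comp (fst ℝ E ℝ) - (fderiv ℝ h p.1).comp (fst ℝ E ℝ)))
        + (ε + h₁ p.1 - h p.1)⁻¹ • (snd ℝ E ℝ - (fderiv ℝ h p.1).comp (fst ℝ E ℝ))) p := by
  have hN : HasFDerivAt (fun q : E × ℝ => q.2 - h q.1)
      (snd ℝ E ℝ - (fderiv ℝ h p.1).comp (fst ℝ E ℝ)) p :=
    (hasFDerivAt_snd).sub ((hh p.1).hasFDerivAt.comp p hasFDerivAt_fst)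
  have hψ : HasFDerivAt (fun q : E × ℝ => ε + h₁ q.1 - h q.1)
      ((fderiv ℝ h₁ p.1).comp (fst ℝ E ℝ) - (fderiv ℝ h p.1).comp (fst ℝ E ℝ)) p :=
    (((hh₁ p.1).hasFDerivAt.comp p hasFDerivAt_fst).const_add ε).sub
      ((hh p.1).hasFDerivAt.comp p hasFDerivAt_fst)
  have hInv := (hasFDerivAt_inv hp).comp p hψ
  have hmul := hN.mul hInv
  have hfun : (fun q : E × ℝ => (q.2 - h q.1) / (ε + h₁ q.1 - h q.1))
      = fun q : E × ℝ => (q.2 - h q.1) *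
          ((fun x : ℝ => x⁻¹) ∘ (fun q : E × ℝ => ε + h₁ q.1 - h q.1)) q := by
    funext q; simp [div_eq_mul_inv, Function.comp]
  rw [hfun]
  exact hmul

private lemma stmt4_G (ε : ℝ) (h₁ h : E → ℝ) (hh₁ : Differentiable ℝ h₁) (hh : Differentiable ℝ h)
    (x0 : E) (t0 : ℝ) (hz : ε + h₁ x0 - h x0 ≠ 0) (u : E) (w0 : ℝ) :
    fderiv ℝ (fun p : E × ℝ => (ε + h₁ p.1 - h p.1)⁻¹) (x0, t0) (u, w0)
      = -(((ε + h₁ x0 - h x0) ^ 2)⁻¹) * (fderiv ℝ h₁ x0 u - fderiv ℝ h x0 u) := by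
  have hψ : HasFDerivAt (fun q : E × ℝ => ε + h₁ q.1 - h q.1)
      ((fderiv ℝ h₁ x0).comp (fst ℝ E ℝ) - (fderiv ℝ h x0).comp (fst ℝ E ℝ)) (x0, t0) :=
    (((hh₁ x0).hasFDerivAt.comp (x0, t0) hasFDerivAt_fst).const_add ε).sub
      ((hh x0).hasFDerivAt.comp (x0, t0) hasFDerivAt_fst)
  have hInv := (hasFDerivAt_inv hz).comp (x0, t0) hψ
  rw [Function.comp_def] at hInv
  rw [hInv.fderiv]
  simp [smul_eq_mul]
  ring

private lemma stmt4_Fj (ε : ℝ) (h₁ h : E → ℝ) (hh₁ : ContDiff ℝ 2 h₁) (hh : ContDiff ℝ 2 h)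
    (x0 : E) (t0 : ℝ) (hz : ε + h₁ x0 - h x0 ≠ 0) (ej u : E) (w0 : ℝ) :
    fderiv ℝ (fun p : E × ℝ =>
        (p.2 - h p.1) * ((fderiv ℝ h₁ p.1 ej - fderiv ℝ h p.1 ej)
            * (-((ε + h₁ p.1 - h p.1) ^ 2)⁻¹))
          + (ε + h₁ p.1 - h p.1)⁻¹ * (0 - fderiv ℝ h p.1 ej)) (x0, t0) (u, w0)
      = (w0 - fderiv ℝ h x0 u) * ((fderiv ℝ h₁ x0 ej - fderiv ℝ h x0 ej)
            * (-((ε + h₁ x0 - h x0) ^ 2)⁻¹))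
        + (t0 - h x0) *
            ((fderiv ℝ (fderiv ℝ h₁) x0 u ej - fderiv ℝ (fderiv ℝ h) x0 u ej)
                * (-((ε + h₁ x0 - h x0) ^ 2)⁻¹)
              + (fderiv ℝ h₁ x0 ej - fderiv ℝ h x0 ej)
                * (2 * (ε + h₁ x0 - h x0) * (fderiv ℝ h₁ x0 u - fderiv ℝ h x0 u)
                    * (((ε + h₁ x0 - h x0) ^ 2) ^ 2)⁻¹))
        + (-((ε + h₁ x0 - h x0) ^ 2)⁻¹ * (fderiv ℝ h₁ x0 u - fderiv ℝ h x0 u))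
            * (0 - fderiv ℝ h x0 ej)
        + (ε + h₁ x0 - h x0)⁻¹ * (-(fderiv ℝ (fderiv ℝ h) x0 u ej)) := by
  have hdh : Differentiable ℝ h := hh.differentiable two_ne_zero
  have hdh₁ : Differentiable ℝ h₁ := hh₁.differentiable two_ne_zero
  have hn : HasFDerivAt (fun p : E × ℝ => p.2 - h p.1)
      (snd ℝ E ℝ - (fderiv ℝ h x0).comp (fst ℝ E ℝ)) (x0, t0) :=
    hasFDerivAt_snd.sub ((hdh x0).hasFDerivAt.comp (x0, t0) hasFDerivAt_fst)
  have hψ : HasFDerivAt (fun q : E × ℝ => ε + h₁ q.1 - h q.1)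
      ((fderiv ℝ h₁ x0).comp (fst ℝ E ℝ) - (fderiv ℝ h x0).comp (fst ℝ E ℝ)) (x0, t0) :=
    (((hdh₁ x0).hasFDerivAt.comp (x0, t0) hasFDerivAt_fst).const_add ε).sub
      ((hdh x0).hasFDerivAt.comp (x0, t0) hasFDerivAt_fst)
  have hQ : HasFDerivAt (fderiv ℝ h) (fderiv ℝ (fderiv ℝ h) x0) x0 :=
    (((hh.fderiv_right (m := 1) (by norm_num)).differentiable one_ne_zero) x0).hasFDerivAt
  have hQ1 : HasFDerivAt (fderiv ℝ h₁) (fderiv ℝ (fderiv ℝ h₁) x0) x0 :=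
    (((hh₁.fderiv_right (m := 1) (by norm_num)).differentiable one_ne_zero) x0).hasFDerivAt
  have ha : HasFDerivAt (fun p : E × ℝ => fderiv ℝ h p.1 ej)
      (((ContinuousLinearMap.apply ℝ ℝ ej).comp (fderiv ℝ (fderiv ℝ h) x0)).comp (fst ℝ E ℝ))
      (x0, t0) :=
    by have h1 := ((ContinuousLinearMap.apply ℝ ℝ ej).hasFDerivAt).comp x0 hQ; exact h1.comp (x0, t0) (hasFDerivAt_fst (𝕜 := ℝ) (p := (x0, t0)))
  have hb : HasFDerivAt (fun p : E × ℝ => fderiv ℝ h₁ p.1 ej)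
      (((ContinuousLinearMap.apply ℝ ℝ ej).comp (fderiv ℝ (fderiv ℝ h₁) x0)).comp (fst ℝ E ℝ))
      (x0, t0) :=
    by have h1 := ((ContinuousLinearMap.apply ℝ ℝ ej).hasFDerivAt).comp x0 hQ1; exact h1.comp (x0, t0) (hasFDerivAt_fst (𝕜 := ℝ) (p := (x0, t0)))
  have hB := hb.sub ha
  have hψ2 : HasFDerivAt (fun q : E × ℝ => (ε + h₁ q.1 - h q.1) ^ 2)
      ((ε + h₁ x0 - h x0) •
          ((fderiv ℝ h₁ x0).comp (fst ℝ E ℝ) - (fderiv ℝ h x0).comp (fst ℝ E ℝ))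
        + (ε + h₁ x0 - h x0) •
          ((fderiv ℝ h₁ x0).comp (fst ℝ E ℝ) - (fderiv ℝ h x0).comp (fst ℝ E ℝ))) (x0, t0) := by
    have := hψ.mul hψ; rw [← pow_two] at this; exact this
  have hinv2 := (hasFDerivAt_inv (pow_ne_zero 2 hz)).comp (x0, t0) hψ2
  rw [Function.comp_def] at hinv2
  have hneg := hinv2.neg
  have hg := hB.mul hneg
  have hterm1 := hn.mul hg
  have hinvψ := (hasFDerivAt_inv hz).comp (x0, t0) hψ
  rw [Function.comp_def] at hinvψ
  have hc := ha.const_sub 0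
  have hterm2 := hinvψ.mul hc
  have HF := hterm1.add hterm2
  have HF' : HasFDerivAt (fun p : E × ℝ =>
        (p.2 - h p.1) * ((fderiv ℝ h₁ p.1 ej - fderiv ℝ h p.1 ej)
            * (-((ε + h₁ p.1 - h p.1) ^ 2)⁻¹))
          + (ε + h₁ p.1 - h p.1)⁻¹ * (0 - fderiv ℝ h p.1 ej)) _ (x0, t0) := HF
  rw [HF'.fderiv]
  simp [smul_eq_mul]
  ring

end Aux

private lemma stmt4_arith_inv (C₀ s W : ℝ) (hC₀ : 0 < C₀) (hs : 0 < s)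
    (hW : 0 < W) (hsW : (1/C₀) * s ≤ W) :
    W⁻¹ ≤ C₀ / s ∧ (W^2)⁻¹ ≤ C₀^2 / s^2 := by
  have h1 : s / C₀ ≤ W := by
    have : (1/C₀) * s = s / C₀ := by ring
    linarith [this.symm ▸ hsW]
  have h2 : W⁻¹ ≤ C₀ / s := by
    calc W⁻¹ ≤ (s / C₀)⁻¹ := by
          apply inv_anti₀ (by positivity) h1
      _ = C₀ / s := by rw [inv_div]
  refine ⟨h2, ?_⟩
  calc (W^2)⁻¹ = W⁻¹ * W⁻¹ := by rw [sq, mul_inv]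
    _ ≤ (C₀/s) * (C₀/s) := by
        apply mul_le_mul h2 h2 (by positivity) (by positivity)
    _ = C₀^2 / s^2 := by ring

private lemma stmt4_arith1 (κ C₀ s r W N a a1 b b1 q q1 : ℝ)
    (hκ : 0 < κ) (hC₀ : 0 < C₀) (hs : 0 < s) (hr : 0 ≤ r) (hr2 : r^2 ≤ s)
    (hW : 0 < W) (hsW : (1/C₀) * s ≤ W)
    (ha : |a| ≤ κ*r) (ha1 : |a1| ≤ κ*r) (hb : |b| ≤ κ*r) (hb1 : |b1| ≤ κ*r)
    (hq : |q| ≤ κ) (hq1 : |q1| ≤ κ) (hN0 : 0 ≤ N) (hNW : N ≤ W) :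
    |(0 - a) * ((b1 - b) * (-(W^2)⁻¹))
      + N * ((q1 - q) * (-(W^2)⁻¹) + (b1 - b) * (2*W*(a1 - a)*((W^2)^2)⁻¹))
      + (-(W^2)⁻¹ * (a1 - a)) * (0 - b)
      + W⁻¹ * (-q)|
    ≤ (12*κ^2*C₀^2 + 3*κ*C₀ + 2*κ*C₀^2 + 1)/s := by
  obtain ⟨hv, hv2⟩ := stmt4_arith_inv C₀ s W hC₀ hs hW hsW
  have hWne : W ≠ 0 := hW.ne'
  have key : r^2 * (W^2)⁻¹ ≤ C₀^2 / s := by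
    calc r^2 * (W^2)⁻¹ ≤ s * (C₀^2/s^2) :=
          mul_le_mul hr2 hv2 (by positivity) hs.le
      _ = C₀^2 / s := by field_simp
  have hbb : |b1 - b| ≤ 2*(κ*r) := by
    calc |b1 - b| ≤ |b1| + |b| := abs_sub _ _
      _ ≤ 2*(κ*r) := by linarith
  have haa : |a1 - a| ≤ 2*(κ*r) := by
    calc |a1 - a| ≤ |a1| + |a| := abs_sub _ _
      _ ≤ 2*(κ*r) := by linarith
  have hqq : |q1 - q| ≤ 2*κ := by
    calc |q1 - q| ≤ |q1| + |q| := abs_sub _ _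
      _ ≤ 2*κ := by linarith
  have hT1 : |(0 - a) * ((b1 - b) * (-(W^2)⁻¹))| ≤ 2*κ^2*C₀^2/s := by
    have e : |(0 - a) * ((b1 - b) * (-(W^2)⁻¹))|
        = |a| * (|b1 - b| * (W^2)⁻¹) := by
      rw [abs_mul, abs_mul, abs_neg, abs_inv, abs_pow, abs_of_pos hW, zero_sub, abs_neg]
    rw [e]
    calc |a| * (|b1 - b| * (W^2)⁻¹) ≤ (κ*r) * ((2*(κ*r)) * (W^2)⁻¹) := by
          gcongr
      _ = 2*κ^2 * (r^2 * (W^2)⁻¹) := by ring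
      _ ≤ 2*κ^2 * (C₀^2/s) := by gcongr
      _ = 2*κ^2*C₀^2/s := by ring
  have hT3 : |(-(W^2)⁻¹ * (a1 - a)) * (0 - b)| ≤ 2*κ^2*C₀^2/s := by
    have e : |(-(W^2)⁻¹ * (a1 - a)) * (0 - b)|
        = (W^2)⁻¹ * |a1 - a| * |b| := by
      rw [abs_mul, abs_mul, abs_neg, abs_inv, abs_pow, abs_of_pos hW, zero_sub, abs_neg]
    rw [e]
    calc (W^2)⁻¹ * |a1 - a| * |b| ≤ (W^2)⁻¹ * (2*(κ*r)) * (κ*r) := by gcongr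
      _ = 2*κ^2 * (r^2 * (W^2)⁻¹) := by ring
      _ ≤ 2*κ^2 * (C₀^2/s) := by gcongr
      _ = 2*κ^2*C₀^2/s := by ring
  have hT4 : |W⁻¹ * (-q)| ≤ κ*C₀/s := by
    have e : |W⁻¹ * (-q)| = W⁻¹ * |q| := by
      rw [abs_mul, abs_neg, abs_inv, abs_of_pos hW]
    rw [e]
    calc W⁻¹ * |q| ≤ (C₀/s) * κ := by
          apply mul_le_mul hv hq (abs_nonneg _) (by positivity)
      _ = κ*C₀/s := by ring
  have hX : |(q1 - q) * (-(W^2)⁻¹)| ≤ 2*κ * (W^2)⁻¹ := by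
    have e : |(q1 - q) * (-(W^2)⁻¹)| = |q1 - q| * (W^2)⁻¹ := by
      rw [abs_mul, abs_neg, abs_inv, abs_pow, abs_of_pos hW]
    rw [e]; gcongr
  have hY : |(b1 - b) * (2*W*(a1 - a)*((W^2)^2)⁻¹)|
      ≤ (2*(κ*r)) * (2*W*(2*(κ*r))*((W^2)^2)⁻¹) := by
    have e : |(b1 - b) * (2*W*(a1 - a)*((W^2)^2)⁻¹)|
        = |b1 - b| * (2*W * |a1 - a| * ((W^2)^2)⁻¹) := by
      rw [abs_mul, abs_mul, abs_mul,
        abs_of_pos (by positivity : (0:ℝ) < 2*W),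
        abs_of_pos (by positivity : (0:ℝ) < ((W^2)^2)⁻¹)]
    rw [e]
    gcongr
  have hT2 : |N * ((q1 - q) * (-(W^2)⁻¹) + (b1 - b) * (2*W*(a1 - a)*((W^2)^2)⁻¹))|
      ≤ 2*κ*C₀/s + 8*κ^2*C₀^2/s := by
    have e1 : W * (2*κ * (W^2)⁻¹) = 2*κ*W⁻¹ := by
      field_simp
    have e2 : W * ((2*(κ*r)) * (2*W*(2*(κ*r))*((W^2)^2)⁻¹)) = 8*κ^2*(r^2 * (W^2)⁻¹) := by
      field_simp
      ring
    calc |N * ((q1 - q) * (-(W^2)⁻¹) + (b1 - b) * (2*W*(a1 - a)*((W^2)^2)⁻¹))|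
        = |N| * |(q1 - q) * (-(W^2)⁻¹) + (b1 - b) * (2*W*(a1 - a)*((W^2)^2)⁻¹)| := abs_mul _ _
      _ ≤ W * (|(q1 - q) * (-(W^2)⁻¹)| + |(b1 - b) * (2*W*(a1 - a)*((W^2)^2)⁻¹)|) := by
          apply mul_le_mul (by rwa [abs_of_nonneg hN0]) (abs_add_le _ _) (abs_nonneg _) hW.le
      _ ≤ W * ((2*κ * (W^2)⁻¹) + (2*(κ*r)) * (2*W*(2*(κ*r))*((W^2)^2)⁻¹)) :=
          mul_le_mul_of_nonneg_left (add_le_add hX hY) hW.le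
      _ = 2*κ*W⁻¹ + 8*κ^2*(r^2 * (W^2)⁻¹) := by rw [mul_add, e1, e2]
      _ ≤ 2*κ*(C₀/s) + 8*κ^2*(C₀^2/s) := by gcongr
      _ = 2*κ*C₀/s + 8*κ^2*C₀^2/s := by ring
  calc |(0 - a) * ((b1 - b) * (-(W^2)⁻¹))
      + N * ((q1 - q) * (-(W^2)⁻¹) + (b1 - b) * (2*W*(a1 - a)*((W^2)^2)⁻¹))
      + (-(W^2)⁻¹ * (a1 - a)) * (0 - b)
      + W⁻¹ * (-q)|
      ≤ |(0 - a) * ((b1 - b) * (-(W^2)⁻¹))|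
        + |N * ((q1 - q) * (-(W^2)⁻¹) + (b1 - b) * (2*W*(a1 - a)*((W^2)^2)⁻¹))|
        + |(-(W^2)⁻¹ * (a1 - a)) * (0 - b)|
        + |W⁻¹ * (-q)| := by
        have t1 := abs_add_le ((0 - a) * ((b1 - b) * (-(W^2)⁻¹))
            + N * ((q1 - q) * (-(W^2)⁻¹) + (b1 - b) * (2*W*(a1 - a)*((W^2)^2)⁻¹))
            + (-(W^2)⁻¹ * (a1 - a)) * (0 - b)) (W⁻¹ * (-q))
        have t2 := abs_add_le ((0 - a) * ((b1 - b) * (-(W^2)⁻¹))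
            + N * ((q1 - q) * (-(W^2)⁻¹) + (b1 - b) * (2*W*(a1 - a)*((W^2)^2)⁻¹)))
            ((-(W^2)⁻¹ * (a1 - a)) * (0 - b))
        have t3 := abs_add_le ((0 - a) * ((b1 - b) * (-(W^2)⁻¹)))
            (N * ((q1 - q) * (-(W^2)⁻¹) + (b1 - b) * (2*W*(a1 - a)*((W^2)^2)⁻¹)))
        linarith
    _ ≤ 2*κ^2*C₀^2/s + (2*κ*C₀/s + 8*κ^2*C₀^2/s) + 2*κ^2*C₀^2/s + κ*C₀/s := by
        linarith
    _ = (12*κ^2*C₀^2 + 3*κ*C₀)/s := by ring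
    _ ≤ (12*κ^2*C₀^2 + 3*κ*C₀ + 2*κ*C₀^2 + 1)/s :=
        (div_le_div_iff_of_pos_right hs).mpr (by nlinarith [mul_pos hκ (mul_pos hC₀ hC₀)])

private lemma stmt4_arith2 (κ C₀ s r W a a1 : ℝ)
    (hκ : 0 < κ) (hC₀ : 0 < C₀) (hs : 0 < s) (hr : 0 ≤ r)
    (hW : 0 < W) (hsW : (1/C₀) * s ≤ W)
    (ha : |a| ≤ κ*r) (ha1 : |a1| ≤ κ*r) :
    |(-(W^2)⁻¹) * (a1 - a)| ≤ (12*κ^2*C₀^2 + 3*κ*C₀ + 2*κ*C₀^2 + 1) * r / s^2 := by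
  obtain ⟨hv, hv2⟩ := stmt4_arith_inv C₀ s W hC₀ hs hW hsW
  have haa : |a1 - a| ≤ 2*(κ*r) := by
    calc |a1 - a| ≤ |a1| + |a| := abs_sub _ _
      _ ≤ 2*(κ*r) := by linarith
  have e : |(-(W^2)⁻¹) * (a1 - a)| = (W^2)⁻¹ * |a1 - a| := by
    rw [abs_mul, abs_neg, abs_inv, abs_pow, abs_of_pos hW]
  rw [e]
  calc (W^2)⁻¹ * |a1 - a| ≤ (C₀^2/s^2) * (2*(κ*r)) :=
        mul_le_mul hv2 haa (abs_nonneg _) (by positivity)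
    _ = (2*κ*C₀^2) * r / s^2 := by ring
    _ ≤ (12*κ^2*C₀^2 + 3*κ*C₀ + 2*κ*C₀^2 + 1) * r / s^2 := by
        apply (div_le_div_iff_of_pos_right (by positivity)).mpr
        nlinarith [mul_nonneg (by positivity : (0:ℝ) ≤ 12*κ^2*C₀^2 + 3*κ*C₀ + 1) hr]



/-- second-derivative bounds for the auxiliary function
v̄(x',x_d) = (x_d - h(x'))/(ε + h₁(x') - h(x')) in the narrow region. -/
theorem stmt4 (n : ℕ) (κ₂ R C₀ : ℝ) (hκ₂ : 0 < κ₂) (hR : 0 < R) (hC₀ : 0 < C₀) :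
    ∃ C > (0:ℝ), ∀ ε : ℝ, 0 < ε → ε < 1/2 →
      ∀ h₁ h : EuclideanSpace ℝ (Fin n) → ℝ,
        ContDiff ℝ 2 h₁ → ContDiff ℝ 2 h →
        h₁ 0 = 0 → h 0 = 0 → fderiv ℝ h₁ 0 = 0 → fderiv ℝ h 0 = 0 →
        (∀ i : ℕ, i ≤ 2 → ∀ x : EuclideanSpace ℝ (Fin n), ‖x‖ < 2 * R →
          ‖iteratedFDeriv ℝ i h₁ x‖ ≤ κ₂ ∧ ‖iteratedFDeriv ℝ i h x‖ ≤ κ₂) →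
        (∀ x : EuclideanSpace ℝ (Fin n), ‖x‖ < 2 * R →
          (1/C₀) * (ε + ‖x‖ ^ 2) ≤ ε + h₁ x - h x) →
        ∀ (x' : EuclideanSpace ℝ (Fin n)) (t : ℝ),
          ‖x'‖ < 2 * R → h x' < t → t < ε + h₁ x' →
          (∀ k j : Fin n,
            |fderiv ℝ (fun p : EuclideanSpace ℝ (Fin n) × ℝ =>
                fderiv ℝ (fun q : EuclideanSpace ℝ (Fin n) × ℝ =>
                  (q.2 - h q.1) / (ε + h₁ q.1 - h q.1)) p
                  (EuclideanSpace.single j 1, 0)) (x', t)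
                (EuclideanSpace.single k 1, 0)|
              ≤ C / (ε + ‖x'‖ ^ 2)) ∧
          (∀ k : Fin n,
            |fderiv ℝ (fun p : EuclideanSpace ℝ (Fin n) × ℝ =>
                fderiv ℝ (fun q : EuclideanSpace ℝ (Fin n) × ℝ =>
                  (q.2 - h q.1) / (ε + h₁ q.1 - h q.1)) p (0, 1)) (x', t)
                (EuclideanSpace.single k 1, 0)|
              ≤ C * ‖x'‖ / (ε + ‖x'‖ ^ 2) ^ 2) ∧
          fderiv ℝ (fun p : EuclideanSpace ℝ (Fin n) × ℝ =>
              fderiv ℝ (fun q : EuclideanSpace ℝ (Fin n) × ℝ =>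
                (q.2 - h q.1) / (ε + h₁ q.1 - h q.1)) p (0, 1)) (x', t) (0, 1) = 0 := by
  refine ⟨12*κ₂^2*C₀^2 + 3*κ₂*C₀ + 2*κ₂*C₀^2 + 1, by positivity, ?_⟩
  intro ε hε hε2 h₁ h hh₁ hh h₁0 h0 dh₁0 dh0 hbnd hlow x' t hx' ht1 ht2
  have hdh : Differentiable ℝ h := hh.differentiable two_ne_zero
  have hdh₁ : Differentiable ℝ h₁ := hh₁.differentiable two_ne_zero
  have hs : 0 < ε + ‖x'‖^2 := by positivity
  have hW : 0 < ε + h₁ x' - h x' :=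
    lt_of_lt_of_le (by positivity) (hlow x' hx')
  have hWne : ε + h₁ x' - h x' ≠ 0 := hW.ne'
  have hScont : Continuous fun p : EuclideanSpace ℝ (Fin n) × ℝ => ε + h₁ p.1 - h p.1 :=
    (continuous_const.add (hdh₁.continuous.comp continuous_fst)).sub
      (hdh.continuous.comp continuous_fst)
  have hmem : {p : EuclideanSpace ℝ (Fin n) × ℝ | 0 < ε + h₁ p.1 - h p.1} ∈ 𝓝 (x', t) :=
    (isOpen_lt continuous_const hScont).mem_nhds hW
  have hb2 : ∀ y : EuclideanSpace ℝ (Fin n), ‖y‖ < 2*R → ‖iteratedFDeriv ℝ 2 h y‖ ≤ κ₂ :=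
    fun y hy => (hbnd 2 le_rfl y hy).2
  have hb2₁ : ∀ y : EuclideanSpace ℝ (Fin n), ‖y‖ < 2*R → ‖iteratedFDeriv ℝ 2 h₁ y‖ ≤ κ₂ :=
    fun y hy => (hbnd 2 le_rfl y hy).1
  have hA : ‖fderiv ℝ h x'‖ ≤ κ₂ * ‖x'‖ := stmt4_fderiv_bound h κ₂ R hR hh dh0 hb2 x' hx'
  have hA1 : ‖fderiv ℝ h₁ x'‖ ≤ κ₂ * ‖x'‖ := stmt4_fderiv_bound h₁ κ₂ R hR hh₁ dh₁0 hb2₁ x' hx'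
  have hnormsingle : ∀ i : Fin n, ‖EuclideanSpace.single i (1:ℝ)‖ = 1 := fun i => by
    rw [EuclideanSpace.norm_single]; norm_num
  have heval : ∀ (L : EuclideanSpace ℝ (Fin n) →L[ℝ] ℝ), ‖L‖ ≤ κ₂ * ‖x'‖ →
      ∀ i : Fin n, |L (EuclideanSpace.single i 1)| ≤ κ₂ * ‖x'‖ := by
    intro L hL i
    calc |L (EuclideanSpace.single i 1)| = ‖L (EuclideanSpace.single i 1)‖ := rfl
      _ ≤ ‖L‖ * ‖EuclideanSpace.single i (1:ℝ)‖ := L.le_opNorm _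
      _ = ‖L‖ := by rw [hnormsingle i, mul_one]
      _ ≤ κ₂ * ‖x'‖ := hL
  have hQ : ∀ i i' : Fin n,
      |fderiv ℝ (fderiv ℝ h) x' (EuclideanSpace.single i 1) (EuclideanSpace.single i' 1)| ≤ κ₂ := by
    intro i i'
    have := stmt4_snd_eval h x' κ₂ (hb2 x' hx') (EuclideanSpace.single i 1)
      (EuclideanSpace.single i' 1)
    rwa [hnormsingle i, hnormsingle i', mul_one, mul_one] at this
  have hQ1 : ∀ i i' : Fin n,
      |fderiv ℝ (fderiv ℝ h₁) x' (EuclideanSpace.single i 1) (EuclideanSpace.single i' 1)| ≤ κ₂ := by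
    intro i i'
    have := stmt4_snd_eval h₁ x' κ₂ (hb2₁ x' hx') (EuclideanSpace.single i 1)
      (EuclideanSpace.single i' 1)
    rwa [hnormsingle i, hnormsingle i', mul_one, mul_one] at this
  have hEq0 : (fun p : EuclideanSpace ℝ (Fin n) × ℝ =>
        fderiv ℝ (fun q : EuclideanSpace ℝ (Fin n) × ℝ =>
          (q.2 - h q.1) / (ε + h₁ q.1 - h q.1)) p (0, 1))
      =ᶠ[𝓝 (x', t)] fun p => (ε + h₁ p.1 - h p.1)⁻¹ := by
    filter_upwards [hmem] with p hp
    rw [(stmt4_inner ε h₁ h hdh₁ hdh p hp.ne').fderiv]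
    simp [smul_eq_mul]
  refine ⟨fun k j => ?_, fun k => ?_, ?_⟩
  · -- second derivatives in tangential directions
    have hEq : (fun p : EuclideanSpace ℝ (Fin n) × ℝ =>
          fderiv ℝ (fun q : EuclideanSpace ℝ (Fin n) × ℝ =>
            (q.2 - h q.1) / (ε + h₁ q.1 - h q.1)) p (EuclideanSpace.single j 1, 0))
        =ᶠ[𝓝 (x', t)] fun p =>
          (p.2 - h p.1) * ((fderiv ℝ h₁ p.1 (EuclideanSpace.single j 1)
              - fderiv ℝ h p.1 (EuclideanSpace.single j 1))
              * (-((ε + h₁ p.1 - h p.1) ^ 2)⁻¹))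
            + (ε + h₁ p.1 - h p.1)⁻¹ * (0 - fderiv ℝ h p.1 (EuclideanSpace.single j 1)) := by
      filter_upwards [hmem] with p hp
      rw [(stmt4_inner ε h₁ h hdh₁ hdh p hp.ne').fderiv]
      simp [smul_eq_mul]
      try ring
    rw [hEq.fderiv_eq, stmt4_Fj ε h₁ h hh₁ hh x' t hWne (EuclideanSpace.single j 1)
      (EuclideanSpace.single k 1) 0]
    exact stmt4_arith1 κ₂ C₀ (ε + ‖x'‖^2) ‖x'‖ (ε + h₁ x' - h x') (t - h x')
      (fderiv ℝ h x' (EuclideanSpace.single k 1)) (fderiv ℝ h₁ x' (EuclideanSpace.single k 1))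
      (fderiv ℝ h x' (EuclideanSpace.single j 1)) (fderiv ℝ h₁ x' (EuclideanSpace.single j 1))
      (fderiv ℝ (fderiv ℝ h) x' (EuclideanSpace.single k 1) (EuclideanSpace.single j 1))
      (fderiv ℝ (fderiv ℝ h₁) x' (EuclideanSpace.single k 1) (EuclideanSpace.single j 1))
      hκ₂ hC₀ hs (norm_nonneg _) (by linarith) hW (hlow x' hx')
      (heval _ hA k) (heval _ hA1 k) (heval _ hA j) (heval _ hA1 j)
      (hQ k j) (hQ1 k j) (by linarith) (by linarith)
  · -- mixed second derivatives
    rw [hEq0.fderiv_eq, stmt4_G ε h₁ h hdh₁ hdh x' t hWne (EuclideanSpace.single k 1) 0]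
    exact stmt4_arith2 κ₂ C₀ (ε + ‖x'‖^2) ‖x'‖ (ε + h₁ x' - h x')
      (fderiv ℝ h x' (EuclideanSpace.single k 1)) (fderiv ℝ h₁ x' (EuclideanSpace.single k 1))
      hκ₂ hC₀ hs (norm_nonneg _) hW (hlow x' hx') (heval _ hA k) (heval _ hA1 k)
  · -- pure normal second derivative vanishes
    rw [hEq0.fderiv_eq, stmt4_G ε h₁ h hdh₁ hdh x' t hWne 0 1]
    simp
end

section
/- Let Ω = { h(x') < x_d < ε + h₁(x'), |x'| < R } be the narrow region with δ(x') := ε + h₁(x') − h(x') ≥ (1/C)(ε + |x'|²), and let v : Ω → ℝ be a W^{1,2} function with v(x', h(x')) = 0 and v(x', ε + h₁(x')) = 1 for each |x'| < R. Then for each fixed x', ∫_{h(x')}^{ε+h₁(x')} |∂_{x_d} v(x', x_d)|² dx_d ≥ 1/δ(x'), and consequently ∫_Ω |∂_{x_d} v|² dx ≥ (1/C) ∫_{|x'|<R} dx'/(ε + |x'|²) ≥ (1/C')/ρ_d(ε). -/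
open MeasureTheory Set
lemma slice_bound (g : ℝ → ℝ) (hg : ContDiff ℝ 1 g) (a b : ℝ) (hab : a < b)
    (ha : g a = 0) (hb : g b = 1) : 1/(b-a) ≤ ∫ t in a..b, (deriv g t)^2 := by
  have hc : Continuous (deriv g) := hg.continuous_deriv le_rfl
  have hI : (∫ t in a..b, deriv g t) = 1 := by
    rw [intervalIntegral.integral_deriv_eq_sub (fun x _ => (hg.differentiable one_ne_zero).differentiableAt)
      (hc.intervalIntegrable a b), ha, hb]; ring
  set c : ℝ := 1/(b-a) with hcdef
  have hba : (0:ℝ) < b - a := by linarith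
  have h0 : 0 ≤ ∫ t in a..b, (deriv g t - c)^2 :=
    intervalIntegral.integral_nonneg hab.le (fun t _ => sq_nonneg _)
  have I1 : IntervalIntegrable (fun t => (deriv g t)^2) volume a b :=
    (hc.pow 2).intervalIntegrable a b
  have I2 : IntervalIntegrable (fun t => 2*c*deriv g t) volume a b :=
    ((continuous_const.mul hc)).intervalIntegrable a b
  have I3 : IntervalIntegrable (fun _ : ℝ => c^2) volume a b :=
    continuous_const.intervalIntegrable a b
  have hexp : (∫ t in a..b, (deriv g t - c)^2)
      = (∫ t in a..b, (deriv g t)^2) - (∫ t in a..b, 2*c*deriv g t) + (∫ t in a..b, (c:ℝ)^2) := by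
    rw [← intervalIntegral.integral_sub I1 I2, ← intervalIntegral.integral_add (I1.sub I2) I3]
    apply intervalIntegral.integral_congr
    intro t _; ring
  rw [hexp, intervalIntegral.integral_const_mul, hI, intervalIntegral.integral_const] at h0
  have hcc : (b - a) • c^2 = c := by
    rw [smul_eq_mul, hcdef]; field_simp
  rw [hcc] at h0
  linarith


set_option maxHeartbeats 1000000 in
lemma radial_bound (n : ℕ) (hn : 1 ≤ n) (R : ℝ) (hR : 0 < R) :
    ∃ κ > (0:ℝ), ∀ ε : ℝ, 0 < ε → ε < 1/2 →
      κ * (1 / (if n = 1 then Real.sqrt ε else if n = 2 then 1 / |Real.log ε| else 1))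
        ≤ ∫ r in Set.Ioo (0:ℝ) R, r^(n-1) / (ε + r^2) := by
  have hInt : ∀ (ε : ℝ), 0 < ε → IntegrableOn (fun r : ℝ => r^(n-1)/(ε+r^2)) (Ioo 0 R) volume := by
    intro ε hε
    have hcont : Continuous fun r : ℝ => r^(n-1)/(ε+r^2) := by
      apply Continuous.div (continuous_pow _) (by continuity)
      intro r; positivity
    exact (hcont.integrableOn_Icc (a := 0) (b := R)).mono_set Ioo_subset_Icc_self
  have hnonneg : ∀ (ε : ℝ), 0 < ε → ∀ r : ℝ, 0 ≤ r → 0 ≤ r^(n-1)/(ε+r^2) := by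
    intro ε hε r hr; positivity
  rcases eq_or_ne n 1 with rfl | hn1
  · -- n = 1
    refine ⟨min R 1 / 2, by positivity, fun ε hε hε2 => ?_⟩
    have hite : (if (1:ℕ) = 1 then Real.sqrt ε else if (1:ℕ) = 2 then 1 / |Real.log ε| else 1)
        = Real.sqrt ε := if_pos rfl
    rw [hite]
    set s := Real.sqrt ε with hsdef
    have hs : 0 < s := Real.sqrt_pos.2 hε
    have hs2 : s^2 = ε := Real.sq_sqrt hε.le
    have hs1 : s ≤ 1 := Real.sqrt_le_one.2 (by linarith)
    set r₁ := min R s with hr1def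
    have hr₁ : 0 < r₁ := lt_min hR hs
    have hr₁R : r₁ ≤ R := min_le_left _ _
    have step1 : (∫ r in Ioo (0:ℝ) r₁, r^(1-1)/(ε+r^2)) ≤ ∫ r in Ioo (0:ℝ) R, r^(1-1)/(ε+r^2) := by
      refine setIntegral_mono_set (hInt ε hε) ?_ ?_
      · filter_upwards [ae_restrict_mem measurableSet_Ioo] with r hr
        exact hnonneg ε hε r hr.1.le
      · exact Filter.Eventually.of_forall (Ioo_subset_Ioo le_rfl hr₁R)
    have step2 : (1/(2*ε)) * (volume (Ioo (0:ℝ) r₁)).toReal ≤ ∫ r in Ioo (0:ℝ) r₁, r^(1-1)/(ε+r^2) := by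
      refine setIntegral_ge_of_const_le_real measurableSet_Ioo (by simp [Real.volume_Ioo]) ?_
        ((hInt ε hε).mono_set (Ioo_subset_Ioo le_rfl hr₁R))
      intro r hr
      have hrs : r < s := lt_of_lt_of_le hr.2 (min_le_right _ _)
      have : r^2 ≤ ε := by nlinarith [hr.1.le]
      simp only [pow_zero, Nat.sub_self]
      rw [one_div, one_div]
      exact inv_anti₀ (by positivity) (by nlinarith)
    have hvol : (volume (Ioo (0:ℝ) r₁)).toReal = r₁ := by
      rw [Real.volume_Ioo, ENNReal.toReal_ofReal (by linarith)]; ring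
    rw [hvol] at step2
    have hlow : min R 1 * s ≤ r₁ := by
      rcases le_total s R with h | h
      · have he : r₁ = s := min_eq_right h
        nlinarith [min_le_right R 1, hs.le]
      · have hR1 : min R 1 = R := min_eq_left (le_trans h hs1)
        have he : r₁ = R := min_eq_left h
        nlinarith
    have key : min R 1 / 2 * (1/s) ≤ 1/(2*ε) * r₁ := by
      have hpos : (0:ℝ) < 1/(2*s^2) := by positivity
      have h := mul_le_mul_of_nonneg_left hlow hpos.le
      have he : 1/(2*s^2)*(min R 1 * s) = min R 1 / 2 * (1/s) := by
        field_simp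
      rw [he, hs2] at h
      exact h
    linarith
  rcases eq_or_ne n 2 with rfl | hn2
  · -- n = 2
    set r₀ := min R 1 with hr0def
    have hr₀ : 0 < r₀ := lt_min hR one_pos
    have hr₀R : r₀ ≤ R := min_le_left _ _
    have hr₀1 : r₀ ≤ 1 := min_le_right _ _
    set a := -(2*Real.log r₀) with hadef
    have ha : 0 ≤ a := by
      have := Real.log_nonpos hr₀.le hr₀1
      simp only [hadef]; linarith
    set m := Real.log (1+2*r₀^2) with hmdef
    have hm : 0 < m := Real.log_pos (by nlinarith)
    refine ⟨min (1/4) (m/(8*(a+1))), lt_min (by norm_num) (div_pos hm (by linarith)), fun ε hε hε2 => ?_⟩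
    have hlogε : Real.log ε < 0 := Real.log_neg hε (by linarith)
    have habs : |Real.log ε| = -Real.log ε := abs_of_neg hlogε
    have hite : (if (2:ℕ) = 1 then Real.sqrt ε else if (2:ℕ) = 2 then 1 / |Real.log ε| else 1)
        = 1 / (-Real.log ε) := by rw [if_neg (by norm_num), if_pos rfl, habs]
    rw [hite, one_div_one_div]
    -- FTC
    have hftc : ∫ r in (0:ℝ)..r₀, r^(2-1)/(ε+r^2)
        = (1/2)*Real.log (ε+r₀^2) - (1/2)*Real.log (ε+0^2) := by
      refine intervalIntegral.integral_eq_sub_of_hasDerivAt (f := fun x => (1/2)*Real.log (ε+x^2)) ?_ ?_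
      · intro x hx
        have hpos : 0 < ε + x^2 := by positivity
        have h1 : HasDerivAt (fun x : ℝ => ε + x^2) (2*x^(2-1)) x :=
          (hasDerivAt_pow 2 x).const_add ε
        have h2 := ((Real.hasDerivAt_log hpos.ne').comp x h1).const_mul (1/2)
        convert h2 using 1
        any_goals rfl
        field_simp
      · apply Continuous.intervalIntegrable
        apply Continuous.div (continuous_pow _) (by continuity)
        intro r; positivity
    have hIoo : (∫ r in Ioo (0:ℝ) r₀, r^(2-1)/(ε+r^2)) = ∫ r in (0:ℝ)..r₀, r^(2-1)/(ε+r^2) := by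
      rw [intervalIntegral.integral_of_le hr₀.le, integral_Ioc_eq_integral_Ioo]
    have step1 : (∫ r in Ioo (0:ℝ) r₀, r^(2-1)/(ε+r^2)) ≤ ∫ r in Ioo (0:ℝ) R, r^(2-1)/(ε+r^2) := by
      refine setIntegral_mono_set (hInt ε hε) ?_ ?_
      · filter_upwards [ae_restrict_mem measurableSet_Ioo] with r hr
        exact hnonneg ε hε r hr.1.le
      · exact Filter.Eventually.of_forall (Ioo_subset_Ioo le_rfl hr₀R)
    rw [hIoo, hftc] at step1
    have h00 : (1/2)*Real.log (ε+0^2) = (1/2)*Real.log ε := by norm_num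
    rw [h00] at step1
    have hlog4 : Real.log (r₀^4) = -2*a := by
      rw [show r₀^4 = r₀^(4:ℕ) by norm_num, Real.log_pow]
      push_cast; simp only [hadef]; ring
    have hlog2 : Real.log (r₀^2) = -a := by
      rw [show r₀^2 = r₀^(2:ℕ) by norm_num, Real.log_pow]
      push_cast; simp only [hadef]; ring
    have hκle : min (1/4) (m/(8*(a+1))) * (-Real.log ε)
        ≤ (1/2)*Real.log (ε+r₀^2) - (1/2)*Real.log ε := by
      rcases le_or_gt ε (r₀^4) with hcase | hcase
      · have h1 : Real.log ε ≤ -2*a := by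
          calc Real.log ε ≤ Real.log (r₀^4) := Real.log_le_log hε hcase
          _ = -2*a := hlog4
        have h2 : -a ≤ Real.log (ε+r₀^2) := by
          rw [← hlog2]
          exact Real.log_le_log (pow_pos hr₀ 2) (by linarith)
        have hprod : min (1/4) (m/(8*(a+1))) * (-Real.log ε) ≤ 1/4 * (-Real.log ε) :=
          mul_le_mul_of_nonneg_right (min_le_left _ _) (by linarith)
        linarith
      · have h1 : -2*a < Real.log ε := by
          rw [← hlog4]
          exact Real.log_lt_log (pow_pos hr₀ 4) hcase
        have h2 : Real.log ε + m ≤ Real.log (ε+r₀^2) := by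
          have hmul : ε*(1+2*r₀^2) ≤ ε + r₀^2 := by nlinarith
          calc Real.log ε + m = Real.log (ε*(1+2*r₀^2)) := by
                rw [Real.log_mul hε.ne' (by nlinarith)]
          _ ≤ Real.log (ε+r₀^2) := Real.log_le_log (mul_pos hε (by positivity)) hmul
        have hstep : min (1/4) (m/(8*(a+1))) * (-Real.log ε) ≤ (m/(8*(a+1))) * (2*a) := by
          apply mul_le_mul (min_le_right _ _) (by linarith) (by linarith) (div_nonneg hm.le (by linarith))
        have hfin : (m/(8*(a+1))) * (2*a) ≤ m/2 := by
          rw [div_mul_eq_mul_div, div_le_div_iff₀ (by linarith) (by norm_num)]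
          nlinarith
        linarith
    linarith
  · -- n ≥ 3 (in fact any n) : constant lower bound
    refine ⟨(R/2)^(n-1)/(1/2+R^2) * (R/2), by positivity, fun ε hε hε2 => ?_⟩
    have hite : (if n = 1 then Real.sqrt ε else if n = 2 then 1 / |Real.log ε| else 1) = 1 := by
      rw [if_neg hn1, if_neg hn2]
    rw [hite]
    have step1 : (∫ r in Ioo (R/2) R, r^(n-1)/(ε+r^2)) ≤ ∫ r in Ioo (0:ℝ) R, r^(n-1)/(ε+r^2) := by
      refine setIntegral_mono_set (hInt ε hε) ?_ ?_
      · filter_upwards [ae_restrict_mem measurableSet_Ioo] with r hr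
        exact hnonneg ε hε r hr.1.le
      · exact Filter.Eventually.of_forall (Ioo_subset_Ioo (by linarith) le_rfl)
    have step2 : ((R/2)^(n-1)/(1/2+R^2)) * (volume (Ioo (R/2) R)).toReal
        ≤ ∫ r in Ioo (R/2) R, r^(n-1)/(ε+r^2) := by
      refine setIntegral_ge_of_const_le_real measurableSet_Ioo (by simp [Real.volume_Ioo]) ?_
        ((hInt ε hε).mono_set (Ioo_subset_Ioo (by linarith) le_rfl))
      intro r hr
      have h1 : (R/2)^(n-1) ≤ r^(n-1) := pow_le_pow_left₀ (by linarith) hr.1.le _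
      have hrpos : 0 < r := lt_trans (by linarith) hr.1
      have h2 : ε + r^2 ≤ 1/2 + R^2 := by nlinarith [hr.1, hr.2]
      exact div_le_div₀ (pow_nonneg hrpos.le _) h1 (by positivity) h2
    have hvol : (volume (Ioo (R/2) R)).toReal = R/2 := by
      rw [Real.volume_Ioo, ENNReal.toReal_ofReal (by linarith)]; ring
    rw [hvol] at step2
    calc (R/2)^(n-1)/(1/2+R^2) * (R/2) * (1/1) = (R/2)^(n-1)/(1/2+R^2) * (R/2) := by ring
    _ ≤ _ := le_trans step2 step1


set_option maxHeartbeats 2000000 in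
/-- lower bound for the vertical energy of a function equal to 0 on the bottom
and 1 on the top of the narrow region, slice-wise and globally. -/
theorem stmt17 (d : ℕ) (hd : 2 ≤ d) (C R : ℝ) (hC : 0 < C) (hR : 0 < R) :
    ∃ C' > (0:ℝ), ∀ ε : ℝ, 0 < ε → ε < 1/2 →
      ∀ h₁ h : EuclideanSpace ℝ (Fin (d - 1)) → ℝ, Continuous h₁ → Continuous h →
        (∀ x' : EuclideanSpace ℝ (Fin (d - 1)), ‖x'‖ < R →
          (1/C) * (ε + ‖x'‖ ^ 2) ≤ ε + h₁ x' - h x' ∧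
            ε + h₁ x' - h x' ≤ C * (ε + ‖x'‖ ^ 2)) →
        ∀ v : EuclideanSpace ℝ (Fin (d - 1)) × ℝ → ℝ, ContDiff ℝ 1 v →
          (∀ x' : EuclideanSpace ℝ (Fin (d - 1)), ‖x'‖ < R →
            v (x', h x') = 0 ∧ v (x', ε + h₁ x') = 1) →
          IntegrableOn (fun p => (deriv (fun s => v (p.1, s)) p.2) ^ 2)
            {p : EuclideanSpace ℝ (Fin (d - 1)) × ℝ |
              ‖p.1‖ < R ∧ h p.1 < p.2 ∧ p.2 < ε + h₁ p.1} volume →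
          (∀ x' : EuclideanSpace ℝ (Fin (d - 1)), ‖x'‖ < R →
            1 / (ε + h₁ x' - h x')
              ≤ ∫ t in (h x')..(ε + h₁ x'), (deriv (fun s => v (x', s)) t) ^ 2) ∧
          (1/C') * (1 / (if d = 2 then Real.sqrt ε else if d = 3 then 1 / |Real.log ε| else 1))
            ≤ ∫ p in {p : EuclideanSpace ℝ (Fin (d - 1)) × ℝ |
                ‖p.1‖ < R ∧ h p.1 < p.2 ∧ p.2 < ε + h₁ p.1},
                (deriv (fun s => v (p.1, s)) p.2) ^ 2 := by
  obtain ⟨κ, hκ, hκbound⟩ := radial_bound (d-1) (by omega) R hR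
  haveI : Nontrivial (EuclideanSpace ℝ (Fin (d-1))) := by
    apply Module.nontrivial_of_finrank_pos (R := ℝ)
    rw [finrank_euclideanSpace_fin]; omega
  have hωpos : 0 < (volume (Metric.ball (0 : EuclideanSpace ℝ (Fin (d-1))) 1)).toReal :=
    ENNReal.toReal_pos (Metric.measure_ball_pos volume _ one_pos).ne' measure_ball_lt_top.ne
  set ω := (volume (Metric.ball (0 : EuclideanSpace ℝ (Fin (d-1))) 1)).toReal with hωdef
  have hdpos : (0:ℝ) < ((d-1 : ℕ) : ℝ) := by
    have h1 : 0 < d - 1 := by omega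
    exact_mod_cast h1
  refine ⟨C / (((d-1:ℕ):ℝ) * ω * κ), by positivity, ?_⟩
  intro ε hε hε2 h₁ h hc1 hc hδ v hv hbc hint
  have hab : ∀ x' : EuclideanSpace ℝ (Fin (d-1)), ‖x'‖ < R → h x' < ε + h₁ x' := by
    intro x' hx'
    have h1 := (hδ x' hx').1
    have h2 : 0 < (1/C) * (ε + ‖x'‖^2) := by positivity
    linarith
  have key : ∀ x' : EuclideanSpace ℝ (Fin (d-1)), ‖x'‖ < R →
      1 / (ε + h₁ x' - h x') ≤ ∫ t in (h x')..(ε + h₁ x'), (deriv (fun s => v (x', s)) t)^2 := by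
    intro x' hx'
    have hg : ContDiff ℝ 1 (fun s : ℝ => v (x', s)) := hv.comp (contDiff_const.prodMk contDiff_id)
    have hsb := slice_bound _ hg (h x') (ε + h₁ x') (hab x' hx') (hbc x' hx').1 (hbc x' hx').2
    have he : ε + h₁ x' - h x' = (ε + h₁ x') - h x' := by ring
    rw [he]
    exact hsb
  refine ⟨key, ?_⟩
  set S : Set (EuclideanSpace ℝ (Fin (d-1)) × ℝ) :=
    {p | ‖p.1‖ < R ∧ h p.1 < p.2 ∧ p.2 < ε + h₁ p.1} with hSdef
  have hSopen : IsOpen S := by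
    exact (isOpen_lt (continuous_fst.norm) continuous_const).inter
      ((isOpen_lt (hc.comp continuous_fst) continuous_snd).inter
       (isOpen_lt continuous_snd (continuous_const.add (hc1.comp continuous_fst))))
  have hSm : MeasurableSet S := hSopen.measurableSet
  set F : EuclideanSpace ℝ (Fin (d-1)) × ℝ → ℝ :=
    fun p => (deriv (fun s => v (p.1, s)) p.2)^2 with hFdef
  have hFnn : ∀ p, 0 ≤ F p := fun p => sq_nonneg _
  have hindint : Integrable (S.indicator F) volume := hint.integrable_indicator hSm
  have hindint' : Integrable (S.indicator F)
      ((volume : Measure (EuclideanSpace ℝ (Fin (d-1)))).prod (volume : Measure ℝ)) := by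
    rwa [← Measure.volume_eq_prod]
  have hfub : (∫ p in S, F p) = ∫ x', ∫ t, S.indicator F (x', t) := by
    rw [← integral_indicator hSm, Measure.volume_eq_prod, integral_prod _ hindint']
  have hinner_int : Integrable (fun x' => ∫ t, S.indicator F (x', t)) volume :=
    hindint'.integral_prod_left
  set G : EuclideanSpace ℝ (Fin (d-1)) → ℝ :=
    (Metric.ball (0:EuclideanSpace ℝ (Fin (d-1))) R).indicator
      (fun x' => (1/C) * (1/(ε + ‖x'‖^2))) with hGdef
  have hcontg : Continuous fun x' : EuclideanSpace ℝ (Fin (d-1)) => (1/C) * (1/(ε + ‖x'‖^2)) := by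
    apply continuous_const.mul
    apply Continuous.div continuous_const (by continuity)
    intro x; positivity
  have hGint : Integrable G volume := by
    apply IntegrableOn.integrable_indicator _ measurableSet_ball
    exact (hcontg.continuousOn.integrableOn_compact
      (isCompact_closedBall _ _)).mono_set Metric.ball_subset_closedBall
  have hpt : ∀ x', G x' ≤ ∫ t, S.indicator F (x', t) := by
    intro x'
    by_cases hx' : ‖x'‖ < R
    · have hmem : x' ∈ Metric.ball (0:EuclideanSpace ℝ (Fin (d-1))) R := by
        rwa [mem_ball_zero_iff]
      have heq : (fun t => S.indicator F (x', t))
          = (Ioo (h x') (ε + h₁ x')).indicator (fun t => F (x', t)) := by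
        funext t
        by_cases ht : t ∈ Ioo (h x') (ε + h₁ x')
        · rw [Set.indicator_of_mem ht,
            Set.indicator_of_mem (show (x', t) ∈ S from ⟨hx', ht.1, ht.2⟩)]
        · rw [Set.indicator_of_notMem ht,
            Set.indicator_of_notMem (fun hm2 => ht ⟨hm2.2.1, hm2.2.2⟩)]
      rw [hGdef, Set.indicator_of_mem hmem, heq, integral_indicator measurableSet_Ioo]
      have h2 : (∫ t in Set.Ioo (h x') (ε + h₁ x'), F (x', t))
          = ∫ t in (h x')..(ε + h₁ x'), (deriv (fun s => v (x', s)) t)^2 := by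
        rw [intervalIntegral.integral_of_le (hab x' hx').le, integral_Ioc_eq_integral_Ioo]
      rw [h2]
      have hδpos : 0 < ε + h₁ x' - h x' := by have := hab x' hx'; linarith
      have hd2 := (hδ x' hx').2
      have h3 : (1/C) * (1/(ε + ‖x'‖^2)) ≤ 1 / (ε + h₁ x' - h x') := by
        rw [one_div_mul_one_div]
        exact one_div_le_one_div_of_le hδpos hd2
      exact h3.trans (key x' hx')
    · rw [hGdef, Set.indicator_of_notMem (fun hm => hx' (mem_ball_zero_iff.1 hm))]
      exact integral_nonneg fun t => Set.indicator_apply_nonneg (fun _ => hFnn _)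
  have hmono : (∫ x', G x') ≤ ∫ x', ∫ t, S.indicator F (x', t) :=
    integral_mono hGint hinner_int hpt
  have hGeq : (∫ x', G x')
      = (1/C) * ∫ x' in Metric.ball (0:EuclideanSpace ℝ (Fin (d-1))) R, 1/(ε + ‖x'‖^2) := by
    rw [hGdef, integral_indicator measurableSet_ball, integral_const_mul]
  have hnorm : (fun x' : EuclideanSpace ℝ (Fin (d-1)) =>
        Set.indicator (Set.Iio R) (fun r => 1/(ε + r^2)) ‖x'‖)
      = (Metric.ball (0:EuclideanSpace ℝ (Fin (d-1))) R).indicator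
          (fun x' => 1/(ε + ‖x'‖^2)) := by
    funext x'
    by_cases hx' : ‖x'‖ < R
    · rw [Set.indicator_of_mem (show ‖x'‖ ∈ Set.Iio R from hx'),
        Set.indicator_of_mem (mem_ball_zero_iff.2 hx')]
    · rw [Set.indicator_of_notMem (show ‖x'‖ ∉ Set.Iio R from hx'),
        Set.indicator_of_notMem (fun hm => hx' (mem_ball_zero_iff.1 hm))]
  have hpolar := MeasureTheory.integral_fun_norm_addHaar
    (volume : Measure (EuclideanSpace ℝ (Fin (d-1))))
    (Set.indicator (Set.Iio R) (fun r => 1/(ε + r^2)))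
  rw [hnorm, integral_indicator measurableSet_ball, finrank_euclideanSpace_fin] at hpolar
  have hrad : (∫ y in Set.Ioi (0:ℝ), y ^ (d-1-1) • Set.indicator (Set.Iio R) (fun r => 1/(ε + r^2)) y)
      = ∫ r in Set.Ioo (0:ℝ) R, r^(d-1-1)/(ε + r^2) := by
    have he : (fun y : ℝ => y ^ (d-1-1) • Set.indicator (Set.Iio R) (fun r => 1/(ε + r^2)) y)
        = Set.indicator (Set.Iio R) (fun y => y^(d-1-1)/(ε+y^2)) := by
      funext y
      by_cases hy : y ∈ Set.Iio R
      · rw [Set.indicator_of_mem hy, Set.indicator_of_mem hy, smul_eq_mul, mul_one_div]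
      · rw [Set.indicator_of_notMem hy, Set.indicator_of_notMem hy, smul_zero]
    rw [he, setIntegral_indicator measurableSet_Iio, Set.Ioi_inter_Iio]
  rw [hrad] at hpolar
  have hfull : (∫ x' in Metric.ball (0:EuclideanSpace ℝ (Fin (d-1))) R, 1/(ε + ‖x'‖^2))
      = ((d-1:ℕ):ℝ) * (ω * ∫ r in Set.Ioo (0:ℝ) R, r^(d-1-1)/(ε + r^2)) := by
    rw [hpolar, nsmul_eq_mul, smul_eq_mul]; rfl
  have hbound := hκbound ε hε hε2
  have hifs : (if d = 2 then Real.sqrt ε else if d = 3 then 1 / |Real.log ε| else 1)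
      = (if d - 1 = 1 then Real.sqrt ε else if d - 1 = 2 then 1 / |Real.log ε| else 1) := by
    rcases eq_or_ne d 2 with rfl|h2
    · norm_num
    · rcases eq_or_ne d 3 with rfl|h3
      · norm_num
      · rw [if_neg h2, if_neg h3, if_neg (by omega), if_neg (by omega)]
  rw [hifs]
  have hJ := hbound
  set ρ := (if d - 1 = 1 then Real.sqrt ε else if d - 1 = 2 then 1 / |Real.log ε| else 1) with hρdef
  set J := ∫ r in Set.Ioo (0:ℝ) R, r^(d-1-1)/(ε + r^2) with hJdef
  calc (1/(C / (((d-1:ℕ):ℝ) * ω * κ))) * (1/ρ)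
      = (1/C) * (((d-1:ℕ):ℝ) * (ω * (κ * (1/ρ)))) := by
        rw [one_div_div]; ring
    _ ≤ (1/C) * (((d-1:ℕ):ℝ) * (ω * J)) := by
        apply mul_le_mul_of_nonneg_left _ (by positivity)
        apply mul_le_mul_of_nonneg_left _ hdpos.le
        exact mul_le_mul_of_nonneg_left hJ hωpos.le
    _ = (1/C) * ∫ x' in Metric.ball (0:EuclideanSpace ℝ (Fin (d-1))) R, 1/(ε + ‖x'‖^2) := by
        rw [hfull]
    _ = ∫ x', G x' := hGeq.symm
    _ ≤ ∫ x', ∫ t, S.indicator F (x', t) := hmono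
    _ = ∫ p in S, F p := hfub.symm
end
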